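/- Let u : Fin n → ℝ and let π be a permutation of Fin n consistent with the ordering of u, i.e., for all x, y, if u(x) < u(y) then π(x) < π(y). Then π minimizes the ℓ₁ distance to u among all permutations: for every permutation ρ of Fin n, ∑_{x} |u(x) − (π(x) : ℝ)| ≤ ∑_{x} |u(x) − (ρ(x) : ℝ)|. -/
import Mathlib

open Finset

private lemma exchange_abs (a b p q : ℝ) (hab : a ≤ b) (hpq : p ≤ q) :
    |a - p| + |b - q| ≤ |a - q| + |b - p| := by
  rcases abs_cases (a - p) with ⟨h1, _⟩ | ⟨h1, _⟩ <;>
  rcases abs_cases (b - q) with ⟨h2, _⟩ | ⟨h2, _⟩ <;>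
  rcases abs_cases (a - q) with ⟨h3, h3'⟩ | ⟨h3, h3'⟩ <;>
  rcases abs_cases (b - p) with ⟨h4, h4'⟩ | ⟨h4, h4'⟩ <;>
  rw [h1, h2, h3, h4] <;> linarith

private lemma strictMono_perm_eq_one {n : ℕ} (σ : Equiv.Perm (Fin n))
    (h : StrictMono σ) : σ = 1 := by
  have hinv : StrictMono (σ.symm : Fin n → Fin n) := by
    intro a b hab
    rcases lt_trichotomy (σ.symm a) (σ.symm b) with h' | h' | h'
    · exact h'
    · exact absurd (congrArg σ h') (by simp; omega)
    · have := h h'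
      simp at this
      omega
  ext i
  haveI : WellFoundedLT (Fin n) := inferInstance
  have h1 : i ≤ σ i := h.le_apply
  have h2 : σ i ≤ σ.symm (σ i) := hinv.le_apply
  simp only [Equiv.symm_apply_apply] at h2
  simp only [Equiv.Perm.one_apply]
  omega

private lemma sum_pair_split {M : Type*} [AddCommMonoid M] {n : ℕ} (f : Fin n → M)
    (i j : Fin n) (hij : i ≠ j) :
    ∑ x : Fin n, f x = f i + f j + ∑ x ∈ (univ.erase i).erase j, f x := by
  rw [← Finset.add_sum_erase univ f (mem_univ i),
      ← Finset.add_sum_erase (univ.erase i) f (Finset.mem_erase.mpr ⟨hij.symm, mem_univ j⟩),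
      add_assoc]

private lemma monge_min {n : ℕ} (v : Fin n → ℝ) (hv : Monotone v) :
    ∀ (N : ℕ) (σ : Equiv.Perm (Fin n)),
      (∑ x : Fin n, (((σ x : ℕ) : ℤ) - ((x : ℕ) : ℤ)).natAbs ^ 2) ≤ N →
      ∑ x : Fin n, |v x - ((x : ℕ) : ℝ)| ≤ ∑ x : Fin n, |v x - ((σ x : ℕ) : ℝ)| := by
  intro N
  induction N with
  | zero =>
    intro σ hσ
    have hone : σ = 1 := by
      ext i
      have h0 : (((σ i : ℕ) : ℤ) - ((i : ℕ) : ℤ)).natAbs ^ 2 = 0 :=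
        Finset.sum_eq_zero_iff.mp (Nat.le_zero.mp hσ) i (mem_univ i)
      have h1 : (((σ i : ℕ) : ℤ) - ((i : ℕ) : ℤ)).natAbs = 0 := (Nat.pow_eq_zero.mp h0).1
      have h2 : ((σ i : ℕ) : ℤ) = ((i : ℕ) : ℤ) := by omega
      have h3 : (σ i : ℕ) = (i : ℕ) := by exact_mod_cast h2
      simp only [Equiv.Perm.one_apply]
      exact h3
    subst hone
    simp
  | succ N ih =>
    intro σ hσ
    by_cases hone : σ = 1
    · subst hone; simp
    · have hex : ∃ i j : Fin n, i < j ∧ σ j < σ i := by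
        by_contra hcon
        push_neg at hcon
        have hm : Monotone σ := by
          intro a b hab
          rcases eq_or_lt_of_le hab with h | h
          · subst h; exact le_rfl
          · exact hcon a b h
        exact hone (strictMono_perm_eq_one σ (hm.strictMono_of_injective σ.injective))
      obtain ⟨i, j, hij, hinv⟩ := hex
      set σ' : Equiv.Perm (Fin n) := (Equiv.swap (σ i) (σ j)) * σ with hσ'def
      have hne : i ≠ j := ne_of_lt hij
      have hσ'i : σ' i = σ j := by simp [hσ'def, Equiv.swap_apply_left]
      have hσ'j : σ' j = σ i := by simp [hσ'def, Equiv.swap_apply_right]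
      have hσ'x : ∀ x : Fin n, x ≠ i → x ≠ j → σ' x = σ x := by
        intro x hxi hxj
        simp only [hσ'def, Equiv.Perm.mul_apply]
        exact Equiv.swap_apply_of_ne_of_ne (fun h => hxi (σ.injective h))
          (fun h => hxj (σ.injective h))
      -- measure decreases
      have hmeas : (∑ x : Fin n, (((σ' x : ℕ) : ℤ) - ((x : ℕ) : ℤ)).natAbs ^ 2) ≤ N := by
        have hlt : (∑ x : Fin n, (((σ' x : ℕ) : ℤ) - ((x : ℕ) : ℤ)).natAbs ^ 2) <
            (∑ x : Fin n, (((σ x : ℕ) : ℤ) - ((x : ℕ) : ℤ)).natAbs ^ 2) := by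
          rw [sum_pair_split _ i j hne, sum_pair_split
            (fun x : Fin n => (((σ x : ℕ) : ℤ) - ((x : ℕ) : ℤ)).natAbs ^ 2) i j hne]
          have htail : ∑ x ∈ (univ.erase i).erase j,
              (((σ' x : ℕ) : ℤ) - ((x : ℕ) : ℤ)).natAbs ^ 2 =
              ∑ x ∈ (univ.erase i).erase j,
              (((σ x : ℕ) : ℤ) - ((x : ℕ) : ℤ)).natAbs ^ 2 := by
            apply Finset.sum_congr rfl
            intro x hx
            simp only [mem_erase] at hx
            rw [hσ'x x hx.2.1 hx.1]
          rw [htail, hσ'i, hσ'j]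
          have hZ : ∀ a : ℤ, (a.natAbs ^ 2 : ℤ) = a ^ 2 := fun a => Int.natAbs_sq a
          have hijZ : ((i : ℕ) : ℤ) < ((j : ℕ) : ℤ) := by exact_mod_cast hij
          have hinvZ : ((σ j : ℕ) : ℤ) < ((σ i : ℕ) : ℤ) := by exact_mod_cast hinv
          have : ((((σ j : ℕ) : ℤ) - ((i : ℕ) : ℤ)).natAbs ^ 2 : ℤ) +
              ((((σ i : ℕ) : ℤ) - ((j : ℕ) : ℤ)).natAbs ^ 2 : ℤ) <
              ((((σ i : ℕ) : ℤ) - ((i : ℕ) : ℤ)).natAbs ^ 2 : ℤ) +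
              ((((σ j : ℕ) : ℤ) - ((j : ℕ) : ℤ)).natAbs ^ 2 : ℤ) := by
            rw [hZ, hZ, hZ, hZ]
            nlinarith
          have h' : (((σ j : ℕ) : ℤ) - ((i : ℕ) : ℤ)).natAbs ^ 2 +
              (((σ i : ℕ) : ℤ) - ((j : ℕ) : ℤ)).natAbs ^ 2 <
              (((σ i : ℕ) : ℤ) - ((i : ℕ) : ℤ)).natAbs ^ 2 +
              (((σ j : ℕ) : ℤ) - ((j : ℕ) : ℤ)).natAbs ^ 2 := by exact_mod_cast this
          omega
        omega
      -- cost does not increase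
      have hcost : ∑ x : Fin n, |v x - ((σ' x : ℕ) : ℝ)| ≤
          ∑ x : Fin n, |v x - ((σ x : ℕ) : ℝ)| := by
        rw [sum_pair_split (fun x : Fin n => |v x - ((σ' x : ℕ) : ℝ)|) i j hne,
            sum_pair_split (fun x : Fin n => |v x - ((σ x : ℕ) : ℝ)|) i j hne]
        have htail : ∑ x ∈ (univ.erase i).erase j, |v x - ((σ' x : ℕ) : ℝ)| =
            ∑ x ∈ (univ.erase i).erase j, |v x - ((σ x : ℕ) : ℝ)| := by
          apply Finset.sum_congr rfl
          intro x hx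
          simp only [mem_erase] at hx
          rw [hσ'x x hx.2.1 hx.1]
        rw [htail, hσ'i, hσ'j]
        have hab : v i ≤ v j := hv hij.le
        have hpq : ((σ j : ℕ) : ℝ) ≤ ((σ i : ℕ) : ℝ) := by
          exact_mod_cast hinv.le
        have := exchange_abs (v i) (v j) ((σ j : ℕ) : ℝ) ((σ i : ℕ) : ℝ) hab hpq
        linarith
      exact le_trans (ih σ' hmeas) hcost

/-- A permutation `π` consistent with the ordering of `u` minimizes the ℓ₁
distance to `u` among all permutations. -/
theorem consistent_perm_minimizes_l1 {n : ℕ} (u : Fin n → ℝ)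
    (π : Equiv.Perm (Fin n))
    (hπ : ∀ x y : Fin n, u x < u y → π x < π y) :
    ∀ ρ : Equiv.Perm (Fin n),
      ∑ x : Fin n, |u x - ((π x : ℕ) : ℝ)| ≤
        ∑ x : Fin n, |u x - ((ρ x : ℕ) : ℝ)| := by
  intro ρ
  set v : Fin n → ℝ := fun i => u (π.symm i) with hv
  have hmono : Monotone v := by
    intro a b hab
    by_contra hlt
    push_neg at hlt
    have := hπ _ _ hlt
    simp only [Equiv.apply_symm_apply] at this
    exact absurd hab (not_le.mpr this)
  set σ : Equiv.Perm (Fin n) := ρ * π⁻¹ with hσ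
  have h1 : ∑ x : Fin n, |u x - ((π x : ℕ) : ℝ)| = ∑ x : Fin n, |v x - ((x : ℕ) : ℝ)| := by
    rw [← Equiv.sum_comp π (fun x : Fin n => |v x - ((x : ℕ) : ℝ)|)]
    apply Finset.sum_congr rfl
    intro x _
    simp [hv]
  have h2 : ∑ x : Fin n, |u x - ((ρ x : ℕ) : ℝ)| = ∑ x : Fin n, |v x - ((σ x : ℕ) : ℝ)| := by
    rw [← Equiv.sum_comp π (fun x : Fin n => |v x - ((σ x : ℕ) : ℝ)|)]
    apply Finset.sum_congr rfl
    intro x _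
    simp [hv, hσ]
  rw [h1, h2]
  exact monge_min v hmono _ σ le_rfl
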